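/- Let A₁, B₁, C₁ be a non-overlapping Napoleon configuration for a nondegenerate triangle ABC in the Euclidean plane, and let A₂, B₂, C₂ be the midpoints of B₁C₁, C₁A₁, A₁B₁ respectively. Then all three triangles A₂B₂C, AB₂C₂ and A₂BC₂ are equilateral. -/

import Mathlib

open EuclideanGeometry AffineSubspace MeasureTheory

private lemma dist_sq_coord (x y : EuclideanSpace ℝ (Fin 2)) :
    dist x y ^ 2 = (x 0 - y 0) ^ 2 + (x 1 - y 1) ^ 2 := by
  rw [EuclideanSpace.dist_eq, Real.sq_sqrt (by positivity)]
  simp [Fin.sum_univ_two, Real.dist_eq, sq_abs]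

private lemma eq_of_sq_eq {a b : ℝ} (ha : 0 ≤ a) (hb : 0 ≤ b) (h : a ^ 2 = b ^ 2) : a = b := by
  rw [← Real.sqrt_sq ha, ← Real.sqrt_sq hb, h]

set_option maxHeartbeats 1000000 in
private lemma apex (P Q X X₁ : EuclideanSpace ℝ (Fin 2)) (hPQ : P ≠ Q)
    (h1 : dist X₁ P = dist P Q) (h2 : dist X₁ Q = dist P Q)
    (hside : (affineSpan ℝ {P, Q}).SOppSide X X₁) :
    ∃ t : ℝ, t ^ 2 = 3 / 4 ∧
      X₁ 0 = (P 0 + Q 0) / 2 - t * (Q 1 - P 1) ∧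
      X₁ 1 = (P 1 + Q 1) / 2 + t * (Q 0 - P 0) ∧
      t * ((Q 0 - P 0) * (X 1 - P 1) - (Q 1 - P 1) * (X 0 - P 0)) < 0 := by
  have hS : 0 < (Q 0 - P 0) ^ 2 + (Q 1 - P 1) ^ 2 := by
    rcases (by positivity : (0:ℝ) ≤ (Q 0 - P 0) ^ 2 + (Q 1 - P 1) ^ 2).lt_or_eq with h | h
    · exact h
    · exfalso; apply hPQ; ext i
      have h0 : Q 0 - P 0 = 0 := by nlinarith [sq_nonneg (Q 0 - P 0), sq_nonneg (Q 1 - P 1)]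
      have h1 : Q 1 - P 1 = 0 := by nlinarith [sq_nonneg (Q 0 - P 0), sq_nonneg (Q 1 - P 1)]
      fin_cases i
      · show P 0 = Q 0; linarith
      · show P 1 = Q 1; linarith
  have e1 : (X₁ 0 - P 0) ^ 2 + (X₁ 1 - P 1) ^ 2 = (P 0 - Q 0) ^ 2 + (P 1 - Q 1) ^ 2 := by
    have h := congrArg (· ^ 2) h1
    simpa [dist_sq_coord] using h
  have e2 : (X₁ 0 - Q 0) ^ 2 + (X₁ 1 - Q 1) ^ 2 = (P 0 - Q 0) ^ 2 + (P 1 - Q 1) ^ 2 := by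
    have h := congrArg (· ^ 2) h2
    simpa [dist_sq_coord] using h
  have horth : (X₁ 0 - (P 0 + Q 0) / 2) * (Q 0 - P 0) + (X₁ 1 - (P 1 + Q 1) / 2) * (Q 1 - P 1) = 0 := by
    linear_combination (e1 - e2) / 2
  have hnorm : (X₁ 0 - (P 0 + Q 0) / 2) ^ 2 + (X₁ 1 - (P 1 + Q 1) / 2) ^ 2
      = 3 / 4 * ((Q 0 - P 0) ^ 2 + (Q 1 - P 1) ^ 2) := by
    linear_combination e1 - horth
  refine ⟨(-(X₁ 0 - (P 0 + Q 0) / 2) * (Q 1 - P 1) + (X₁ 1 - (P 1 + Q 1) / 2) * (Q 0 - P 0))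
      / ((Q 0 - P 0) ^ 2 + (Q 1 - P 1) ^ 2), ?_, ?_, ?_, ?_⟩
  · rw [div_pow, div_eq_iff (by positivity)]
    linear_combination ((Q 0 - P 0) ^ 2 + (Q 1 - P 1) ^ 2) * hnorm -
      ((X₁ 0 - (P 0 + Q 0) / 2) * (Q 0 - P 0) + (X₁ 1 - (P 1 + Q 1) / 2) * (Q 1 - P 1)) * horth
  · have h : (-(X₁ 0 - (P 0 + Q 0) / 2) * (Q 1 - P 1) + (X₁ 1 - (P 1 + Q 1) / 2) * (Q 0 - P 0))
        * (Q 1 - P 1) = -(X₁ 0 - (P 0 + Q 0) / 2) * ((Q 0 - P 0) ^ 2 + (Q 1 - P 1) ^ 2) := by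
      linear_combination (Q 0 - P 0) * horth
    rw [div_mul_eq_mul_div, h, mul_div_cancel_right₀ _ (ne_of_gt hS)]
    ring
  · have h : (-(X₁ 0 - (P 0 + Q 0) / 2) * (Q 1 - P 1) + (X₁ 1 - (P 1 + Q 1) / 2) * (Q 0 - P 0))
        * (Q 0 - P 0) = (X₁ 1 - (P 1 + Q 1) / 2) * ((Q 0 - P 0) ^ 2 + (Q 1 - P 1) ^ 2) := by
      linear_combination (-(Q 1 - P 1)) * horth
    rw [div_mul_eq_mul_div, h, mul_div_cancel_right₀ _ (ne_of_gt hS)]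
    ring
  · obtain ⟨⟨q₁, hq₁, q₂, hq₂, hray⟩, hX, hX₁⟩ := hside
    obtain ⟨r, hr⟩ := (vadd_left_mem_affineSpan_pair (k := ℝ) (p₁ := P) (p₂ := Q)).1
      (show (q₁ -ᵥ P) +ᵥ P ∈ _ by rwa [vsub_vadd])
    obtain ⟨u, hu⟩ := (vadd_left_mem_affineSpan_pair (k := ℝ) (p₁ := P) (p₂ := Q)).1
      (show (q₂ -ᵥ P) +ᵥ P ∈ _ by rwa [vsub_vadd])
    have hq10 : q₁ 0 - P 0 = r * (Q 0 - P 0) := by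
      have := congrArg (fun z : EuclideanSpace ℝ (Fin 2) => z 0) hr
      simpa [vsub_eq_sub] using this.symm
    have hq11 : q₁ 1 - P 1 = r * (Q 1 - P 1) := by
      have := congrArg (fun z : EuclideanSpace ℝ (Fin 2) => z 1) hr
      simpa [vsub_eq_sub] using this.symm
    have hq20 : q₂ 0 - P 0 = u * (Q 0 - P 0) := by
      have := congrArg (fun z : EuclideanSpace ℝ (Fin 2) => z 0) hu
      simpa [vsub_eq_sub] using this.symm
    have hq21 : q₂ 1 - P 1 = u * (Q 1 - P 1) := by
      have := congrArg (fun z : EuclideanSpace ℝ (Fin 2) => z 1) hu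
      simpa [vsub_eq_sub] using this.symm
    rcases hray with h0 | h0 | ⟨r₁, r₂, hr₁, hr₂, hkey⟩
    · exact absurd ((vsub_eq_zero_iff_eq.mp h0) ▸ hq₁) hX
    · exact absurd ((vsub_eq_zero_iff_eq.mp h0).symm ▸ hq₂) hX₁
    · have E0 : r₁ * (X 0 - q₁ 0) = r₂ * (q₂ 0 - X₁ 0) := by
        have := congrArg (fun z : EuclideanSpace ℝ (Fin 2) => z 0) hkey
        simpa [vsub_eq_sub] using this
      have E1 : r₁ * (X 1 - q₁ 1) = r₂ * (q₂ 1 - X₁ 1) := by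
        have := congrArg (fun z : EuclideanSpace ℝ (Fin 2) => z 1) hkey
        simpa [vsub_eq_sub] using this
      rw [div_mul_eq_mul_div]
      apply div_neg_of_neg_of_pos _ hS
      have hlin : r₁ * ((Q 0 - P 0) * (X 1 - P 1) - (Q 1 - P 1) * (X 0 - P 0))
          = -(r₂ * (-(X₁ 0 - (P 0 + Q 0) / 2) * (Q 1 - P 1)
              + (X₁ 1 - (P 1 + Q 1) / 2) * (Q 0 - P 0))) := by
        linear_combination (Q 0 - P 0) * E1 - (Q 1 - P 1) * E0 + r₁ * (Q 0 - P 0) * hq11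
          - r₁ * (Q 1 - P 1) * hq10 + r₂ * (Q 0 - P 0) * hq21 - r₂ * (Q 1 - P 1) * hq20
      have hnum2 : (-(X₁ 0 - (P 0 + Q 0) / 2) * (Q 1 - P 1)
            + (X₁ 1 - (P 1 + Q 1) / 2) * (Q 0 - P 0)) ^ 2
          = 3 / 4 * ((Q 0 - P 0) ^ 2 + (Q 1 - P 1) ^ 2) ^ 2 := by
        linear_combination ((Q 0 - P 0) ^ 2 + (Q 1 - P 1) ^ 2) * hnorm -
          ((X₁ 0 - (P 0 + Q 0) / 2) * (Q 0 - P 0) + (X₁ 1 - (P 1 + Q 1) / 2) * (Q 1 - P 1)) * horth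
      have hkey2 : r₁ * ((-(X₁ 0 - (P 0 + Q 0) / 2) * (Q 1 - P 1)
            + (X₁ 1 - (P 1 + Q 1) / 2) * (Q 0 - P 0))
            * ((Q 0 - P 0) * (X 1 - P 1) - (Q 1 - P 1) * (X 0 - P 0)))
          = -(r₂ * (-(X₁ 0 - (P 0 + Q 0) / 2) * (Q 1 - P 1)
              + (X₁ 1 - (P 1 + Q 1) / 2) * (Q 0 - P 0)) ^ 2) := by
        linear_combination (-(X₁ 0 - (P 0 + Q 0) / 2) * (Q 1 - P 1)
              + (X₁ 1 - (P 1 + Q 1) / 2) * (Q 0 - P 0)) * hlin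
      have hfin : -(r₂ * (-(X₁ 0 - (P 0 + Q 0) / 2) * (Q 1 - P 1)
            + (X₁ 1 - (P 1 + Q 1) / 2) * (Q 0 - P 0)) ^ 2) < 0 := by
        rw [hnum2]
        have := mul_pos hr₂ (mul_pos hS hS)
        nlinarith [this]
      by_contra hcon
      push_neg at hcon
      have h2 : 0 ≤ -(r₂ * (-(X₁ 0 - (P 0 + Q 0) / 2) * (Q 1 - P 1)
            + (X₁ 1 - (P 1 + Q 1) / 2) * (Q 0 - P 0)) ^ 2) :=
        hkey2 ▸ mul_nonneg hr₁.le hcon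
      linarith

set_option maxHeartbeats 1000000 in
theorem napoleon_three_midpoint_triangles_equilateral
    (A B C A₁ B₁ C₁ : EuclideanSpace ℝ (Fin 2))
    (hABC : AffineIndependent ℝ ![A, B, C])
    (hA₁ : dist A₁ B = dist B C) (hA₁' : dist A₁ C = dist B C)
    (hB₁ : dist A B₁ = dist A C) (hB₁' : dist B₁ C = dist A C)
    (hC₁ : dist A C₁ = dist A B) (hC₁' : dist B C₁ = dist A B)
    (hsideA : (affineSpan ℝ {B, C}).SOppSide A A₁)
    (hsideB : (affineSpan ℝ {C, A}).SOppSide B B₁)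
    (hsideC : (affineSpan ℝ {A, B}).SOppSide C C₁)
    (A₂ B₂ C₂ : EuclideanSpace ℝ (Fin 2))
    (hA₂ : A₂ = (2:ℝ)⁻¹ • (B₁ + C₁))
    (hB₂ : B₂ = (2:ℝ)⁻¹ • (C₁ + A₁))
    (hC₂ : C₂ = (2:ℝ)⁻¹ • (A₁ + B₁)) :
    (dist A₂ B₂ = dist B₂ C ∧ dist B₂ C = dist C A₂) ∧
    (dist A B₂ = dist B₂ C₂ ∧ dist B₂ C₂ = dist C₂ A) ∧
    (dist A₂ B = dist B C₂ ∧ dist B C₂ = dist C₂ A₂) := by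
  have hinj := hABC.injective
  have hBC : B ≠ C := by
    intro h
    exact absurd (hinj (show ![A, B, C] 1 = ![A, B, C] 2 by simp [h])) (by decide)
  have hCA : C ≠ A := by
    intro h
    exact absurd (hinj (show ![A, B, C] 2 = ![A, B, C] 0 by simp [h])) (by decide)
  have hAB : A ≠ B := by
    intro h
    exact absurd (hinj (show ![A, B, C] 0 = ![A, B, C] 1 by simp [h])) (by decide)
  obtain ⟨ta, hta2, hA₁0, hA₁1, htaD⟩ := apex B C A A₁ hBC hA₁ hA₁' hsideA
  have hB₁c : dist B₁ C = dist C A := by rw [hB₁', dist_comm A C]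
  have hB₁a : dist B₁ A = dist C A := by rw [dist_comm B₁ A, hB₁, dist_comm A C]
  obtain ⟨tb, htb2, hB₁0, hB₁1, htbD⟩ := apex C A B B₁ hCA hB₁c hB₁a hsideB
  have hC₁a : dist C₁ A = dist A B := by rw [dist_comm C₁ A, hC₁]
  have hC₁b : dist C₁ B = dist A B := by rw [dist_comm C₁ B, hC₁']
  obtain ⟨tc, htc2, hC₁0, hC₁1, htcD⟩ := apex A B C C₁ hAB hC₁a hC₁b hsideC
  have htab : tb = ta := by
    rcases mul_eq_zero.mp (show (ta - tb) * (ta + tb) = 0 by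
        linear_combination hta2 - htb2) with h | h
    · linarith
    · exfalso
      have hta : ta = -tb := by linarith
      rw [hta] at htaD
      nlinarith [htaD, htbD]
  have htac : tc = ta := by
    rcases mul_eq_zero.mp (show (ta - tc) * (ta + tc) = 0 by
        linear_combination hta2 - htc2) with h | h
    · linarith
    · exfalso
      have hta : ta = -tc := by linarith
      rw [hta] at htaD
      nlinarith [htaD, htcD]
  rw [htab] at hB₁0 hB₁1
  rw [htac] at hC₁0 hC₁1
  have hA₂0 : A₂ 0 = 2⁻¹ * (B₁ 0 + C₁ 0) := by rw [hA₂]; rfl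
  have hA₂1 : A₂ 1 = 2⁻¹ * (B₁ 1 + C₁ 1) := by rw [hA₂]; rfl
  have hB₂0 : B₂ 0 = 2⁻¹ * (C₁ 0 + A₁ 0) := by rw [hB₂]; rfl
  have hB₂1 : B₂ 1 = 2⁻¹ * (C₁ 1 + A₁ 1) := by rw [hB₂]; rfl
  have hC₂0 : C₂ 0 = 2⁻¹ * (A₁ 0 + B₁ 0) := by rw [hC₂]; rfl
  have hC₂1 : C₂ 1 = 2⁻¹ * (A₁ 1 + B₁ 1) := by rw [hC₂]; rfl
  refine ⟨⟨?_, ?_⟩, ⟨?_, ?_⟩, ⟨?_, ?_⟩⟩ <;>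
      apply eq_of_sq_eq dist_nonneg dist_nonneg <;>
      rw [dist_sq_coord, dist_sq_coord] <;>
      simp only [hA₂0, hA₂1, hB₂0, hB₂1, hC₂0, hC₂1, hA₁0, hA₁1, hB₁0, hB₁1, hC₁0, hC₁1]
  · linear_combination (3/4*(C 1)^2 + 3/4*(C 0)^2 - B 1*C 1 + 1/4*(B 1)^2 - B 0*C 0
      + 1/4*(B 0)^2 - 1/2*A 1*C 1 + 1/2*A 1*B 1 - 1/2*A 0*C 0 + 1/2*A 0*B 0) * hta2
  · linear_combination (1/2*B 1*C 1 - 1/4*(B 1)^2 + 1/2*B 0*C 0 - 1/4*(B 0)^2 - 1/2*A 1*C 1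
      + 1/4*(A 1)^2 - 1/2*A 0*C 0 + 1/4*(A 0)^2) * hta2
  · linear_combination (-1/2*B 1*C 1 - 1/4*(B 1)^2 - 1/2*B 0*C 0 - 1/4*(B 0)^2 + 1/2*A 1*C 1
      + A 1*B 1 - 3/4*(A 1)^2 + 1/2*A 0*C 0 + A 0*B 0 - 3/4*(A 0)^2) * hta2
  · linear_combination (1/4*(C 1)^2 + 1/4*(C 0)^2 + 1/2*B 1*C 1 + 1/2*B 0*C 0 - A 1*C 1
      - 1/2*A 1*B 1 + 3/4*(A 1)^2 - A 0*C 0 - 1/2*A 0*B 0 + 3/4*(A 0)^2) * hta2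
  · linear_combination (1/4*(C 1)^2 + 1/4*(C 0)^2 - 1/2*B 1*C 1 - 1/2*B 0*C 0 + 1/2*A 1*B 1
      - 1/4*(A 1)^2 + 1/2*A 0*B 0 - 1/4*(A 0)^2) * hta2
  · linear_combination (-1/4*(C 1)^2 - 1/4*(C 0)^2 + B 1*C 1 - 3/4*(B 1)^2 + B 0*C 0
      - 3/4*(B 0)^2 - 1/2*A 1*C 1 + 1/2*A 1*B 1 - 1/2*A 0*C 0 + 1/2*A 0*B 0) * hta2
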